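/- Let λ ≠ 0, k ≠ 0 be real constants and fix ε ∈ ℝ. If φ : ℝ × ℝ → ℝ is a positive differentiable solution of u_t + u^k·u_x + λ·u = 0 on ℝ², then the function ψ(x,t) = (1 − ε e^{λ k t})^{−1/k}·φ(x, −(1/(λk))·ln(e^{−λ k t} − ε)) satisfies the same equation at every point (x,t) with e^{−λ k t} > ε (note that then 1 − ε e^{λ k t} = e^{λ k t}(e^{−λ k t} − ε) > 0). -/

import Mathlib

open Real

/-- case m = 1. If φ is a positive differentiable solution of
`u_t + u^k·u_x + λ·u = 0` on ℝ², then
`ψ(x,t) = (1 − ε e^{λkt})^{−1/k}·φ(x, −(1/(λk))·ln(e^{−λkt} − ε))` satisfies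
the same equation at every point with `e^{−λkt} > ε`. -/
theorem case7_G7_transformation
    (lam k : ℝ) (hlam : lam ≠ 0) (hk : k ≠ 0) (ε : ℝ)
    (φ : ℝ × ℝ → ℝ)
    (hφ : Differentiable ℝ φ)
    (hpos : ∀ x t : ℝ, 0 < φ (x, t))
    (hsol : ∀ x t : ℝ,
      fderiv ℝ φ (x, t) (0, 1) + φ (x, t) ^ k * fderiv ℝ φ (x, t) (1, 0)
        + lam * φ (x, t) = 0) :
    ∀ ψ : ℝ × ℝ → ℝ,
      ψ = (fun p : ℝ × ℝ =>
        (1 - ε * exp (lam * k * p.2)) ^ (-(1 / k)) *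
          φ (p.1, -(1 / (lam * k)) * Real.log (exp (-(lam * k * p.2)) - ε))) →
      ∀ x t : ℝ,
        ε < exp (-(lam * k * t)) →
        DifferentiableAt ℝ ψ (x, t) ∧
        fderiv ℝ ψ (x, t) (0, 1) + ψ (x, t) ^ k * fderiv ℝ ψ (x, t) (1, 0)
          + lam * ψ (x, t) = 0 := by
  intro ψ hψdef x t ht
  have hlk : lam * k ≠ 0 := mul_ne_zero hlam hk
  have hE : (0:ℝ) < exp (-(lam * k * t)) - ε := sub_pos.mpr ht
  set E : ℝ := exp (lam * k * t) with hEdef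
  have hEpos : 0 < E := exp_pos _
  have hEinv : exp (-(lam * k * t)) = E⁻¹ := by rw [exp_neg]
  set c : ℝ := 1 - ε * E with hcdef
  have hc : 0 < c := by
    have h1 : c = E * (exp (-(lam*k*t)) - ε) := by
      rw [hEinv, hcdef, mul_sub, mul_inv_cancel₀ hEpos.ne']; ring
    rw [h1]; exact mul_pos hEpos hE
  set τ : ℝ := -(1 / (lam * k)) * Real.log (exp (-(lam * k * t)) - ε) with hτdef
  set B : ℝ := c ^ (-(1/k) - 1) with hBdef
  set A : ℝ := c ^ (-(1/k)) with hAdef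
  have hBpos : 0 < B := rpow_pos_of_pos hc _
  have hAB : A = B * c := by
    rw [hAdef, hBdef, ← Real.rpow_add_one hc.ne']
    ring_nf
  -- derivative of T
  have hu : HasDerivAt (fun s => exp (-(lam * k * s)) - ε)
      (-(lam*k) * exp (-(lam*k*t))) t := by
    have h1 : HasDerivAt (fun s : ℝ => -(lam * k * s)) (-(lam*k)) t := by
      simpa [neg_mul, mul_comm] using ((hasDerivAt_id t).const_mul (-(lam*k)))
    have h2 := h1.exp.sub_const ε
    refine h2.congr_deriv ?_
    ring
  have hT : HasDerivAt (fun s => -(1 / (lam * k)) * Real.log (exp (-(lam * k * s)) - ε))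
      c⁻¹ t := by
    have h2 := (hu.log hE.ne').const_mul (-(1 / (lam * k)))
    refine h2.congr_deriv ?_
    have h1 : c = E * (exp (-(lam*k*t)) - ε) := by
      rw [hEinv, hcdef, mul_sub, mul_inv_cancel₀ hEpos.ne']; ring
    rw [h1, hEinv]
    have hc' : (1 - E * ε) ≠ 0 := by rw [hcdef] at hc; intro h; rw [show (1:ℝ) - E*ε = 1 - ε*E by ring] at h; linarith
    field_simp
  -- derivative of A
  have hv : HasDerivAt (fun s => 1 - ε * exp (lam * k * s)) (-(ε * ((lam*k) * E))) t := by
    have h1 : HasDerivAt (fun s : ℝ => lam * k * s) (lam*k) t := by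
      simpa [mul_comm] using ((hasDerivAt_id t).const_mul (lam*k))
    have h2 := (h1.exp.const_mul ε).const_sub 1
    refine h2.congr_deriv ?_
    rw [hEdef]; ring
  have hA : HasDerivAt (fun s => (1 - ε * exp (lam * k * s)) ^ (-(1/k)))
      (ε * lam * E * B) t := by
    have h2 := (Real.hasDerivAt_rpow_const (x := c) (p := -(1/k)) (Or.inl hc.ne')).comp t hv
    refine h2.congr_deriv ?_
    rw [hBdef]
    field_simp
  -- full derivative of ψ
  set Dφ := fderiv ℝ φ (x, τ) with hDφdef
  set L : (ℝ × ℝ) →L[ℝ] ℝ × ℝ :=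
    (ContinuousLinearMap.fst ℝ ℝ ℝ).prod (c⁻¹ • ContinuousLinearMap.snd ℝ ℝ ℝ) with hLdef
  have hF : HasFDerivAt (fun p : ℝ×ℝ => (p.1, -(1 / (lam * k)) * Real.log (exp (-(lam * k * p.2)) - ε)))
      L (x, t) :=
    HasFDerivAt.prodMk hasFDerivAt_fst (by have := hT.comp_hasFDerivAt (x, t) (hasFDerivAt_snd (𝕜 := ℝ) (p := (x, t))); exact this)
  have hφF : HasFDerivAt
      (fun p : ℝ×ℝ => φ (p.1, -(1 / (lam * k)) * Real.log (exp (-(lam * k * p.2)) - ε)))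
      (Dφ.comp L) (x, t) := (hφ (x, τ)).hasFDerivAt.comp (x, t) hF
  have hAp : HasFDerivAt (fun p : ℝ×ℝ => (1 - ε * exp (lam * k * p.2)) ^ (-(1/k)))
      ((ε * lam * E * B) • ContinuousLinearMap.snd ℝ ℝ ℝ) (x, t) :=
    by have := hA.comp_hasFDerivAt (x, t) (hasFDerivAt_snd (𝕜 := ℝ) (p := (x, t))); exact this
  have hmul := hAp.mul hφF
  have hψval : ∀ p : ℝ × ℝ, ψ p =
      (1 - ε * exp (lam * k * p.2)) ^ (-(1/k)) *
        φ (p.1, -(1 / (lam * k)) * Real.log (exp (-(lam * k * p.2)) - ε)) := by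
    intro p; rw [hψdef]
  have hψD : HasFDerivAt ψ
      (A • (Dφ.comp L) +
        φ (x, τ) • ((ε * lam * E * B) • ContinuousLinearMap.snd ℝ ℝ ℝ)) (x, t) := by
    rw [hψdef]
    exact hmul
  refine ⟨hψD.differentiableAt, ?_⟩
  rw [hψD.fderiv]
  set f : ℝ := φ (x, τ) with hfdef
  have hfpos : 0 < f := hpos x τ
  -- evaluate the derivative
  have hL01 : L (0, 1) = ((0:ℝ), c⁻¹) := by
    simp [hLdef]
  have hL10 : L (1, 0) = ((1:ℝ), 0) := by
    simp [hLdef]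
  have hDφsmul : Dφ ((0:ℝ), c⁻¹) = c⁻¹ * Dφ (0, 1) := by
    have : ((0:ℝ), c⁻¹) = c⁻¹ • ((0:ℝ), (1:ℝ)) := by simp
    rw [this, map_smul]; rfl
  have hval : ψ (x, t) = A * f := by
    rw [hψval (x, t)]
  have hev1 : (A • (Dφ.comp L) +
      f • ((ε * lam * E * B) • ContinuousLinearMap.snd ℝ ℝ ℝ)) (0, 1)
      = A * (c⁻¹ * Dφ (0, 1)) + f * (ε * lam * E * B) := by
    simp [ContinuousLinearMap.add_apply, ContinuousLinearMap.smul_apply,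
      ContinuousLinearMap.comp_apply, hL01, hDφsmul, smul_eq_mul]
  have hev2 : (A • (Dφ.comp L) +
      f • ((ε * lam * E * B) • ContinuousLinearMap.snd ℝ ℝ ℝ)) (1, 0)
      = A * Dφ (1, 0) := by
    simp [ContinuousLinearMap.add_apply, ContinuousLinearMap.smul_apply,
      ContinuousLinearMap.comp_apply, hL10, smul_eq_mul]
  rw [hval, hev1, hev2]
  -- ψ^k
  have hψk : (A * f) ^ k = c⁻¹ * f ^ k := by
    rw [Real.mul_rpow (rpow_pos_of_pos hc _).le hfpos.le,
      ← Real.rpow_mul hc.le, show -(1/k) * k = (-1 : ℝ) by field_simp,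
      Real.rpow_neg_one]
  rw [hψk]
  have hs := hsol x τ
  rw [← hDφdef, ← hfdef] at hs
  rw [hAB]
  field_simp
  linear_combination B * hs
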